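/- Let x_n = (-t_n + 1)/(-t_n - 1) where t_n → +∞ (so x_n → 1⁻), let x₀ ∈ (-1,1) and z ∈ Δ. Then lim_{n→∞} [d(z, x_n) - d(x₀, x_n)] = ln( ((1 - x₀²)·|1 - z|²) / ((1 - |z|²)·|1 - x₀|²) ), where d(a,b) = ln((|1-\bar{a}b|+|a-b|)/(|1-\bar{a}b|-|a-b|)) is the hyperbolic distance on the unit disk. -/

import Mathlib

open Filter Topology

/-- The hyperbolic distance on the unit disk:
`d(a,b) = ln((|1 - conj a * b| + |a - b|)/(|1 - conj a * b| - |a - b|))`. -/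
noncomputable def hypDist (a b : ℂ) : ℝ :=
  Real.log ((‖1 - (starRingEnd ℂ) a * b‖ + ‖a - b‖) / (‖1 - (starRingEnd ℂ) a * b‖ - ‖a - b‖))

lemma norm_sq_eq' (w : ℂ) : ‖w‖^2 = w.re^2 + w.im^2 := by
  rw [← Complex.normSq_eq_norm_sq, Complex.normSq_apply]; ring

lemma sq_diff (a : ℂ) (x : ℝ) :
    ‖1 - (starRingEnd ℂ) a * (x:ℂ)‖^2 - ‖a - (x:ℂ)‖^2 = (1 - ‖a‖^2) * (1 - x^2) := by
  rw [norm_sq_eq', norm_sq_eq', norm_sq_eq']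
  simp [Complex.sub_re, Complex.sub_im, Complex.mul_re, Complex.mul_im]
  ring

lemma hypDist_eq (a : ℂ) (ha : ‖a‖ < 1) (x : ℝ) (hx : |x| < 1) :
    hypDist a x = Real.log ((‖1 - (starRingEnd ℂ) a * (x:ℂ)‖ + ‖a - (x:ℂ)‖)^2)
      - Real.log (1 - ‖a‖^2) - Real.log (1 - x^2) := by
  have ha2 : 0 < 1 - ‖a‖^2 := by nlinarith [norm_nonneg a]
  have hx2 : 0 < 1 - x^2 := by
    have := abs_lt.mp hx
    nlinarith
  set A := ‖1 - (starRingEnd ℂ) a * (x:ℂ)‖ with hA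
  set B := ‖a - (x:ℂ)‖ with hB
  have hAB : A^2 - B^2 = (1 - ‖a‖^2) * (1 - x^2) := sq_diff a x
  have hprod : 0 < (1 - ‖a‖^2) * (1 - x^2) := mul_pos ha2 hx2
  have hBnn : (0:ℝ) ≤ B := norm_nonneg _
  have hBA : B < A := by
    have h2 : B^2 < A^2 := by nlinarith
    exact lt_of_pow_lt_pow_left₀ 2 (norm_nonneg _) h2
  have hApos : 0 < A + B := by linarith
  have key : (A + B) / (A - B) = (A + B)^2 / ((1 - ‖a‖^2) * (1 - x^2)) := by
    rw [← hAB, div_eq_div_iff (by linarith) (by rw [hAB]; positivity)]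
    ring
  rw [hypDist, key, Real.log_div (by positivity) (by positivity),
    Real.log_mul (by positivity) (by positivity)]
  ring

lemma norm_one_sub_at_one (a : ℂ) :
    ‖1 - (starRingEnd ℂ) a * ((1:ℝ):ℂ)‖ + ‖a - ((1:ℝ):ℂ)‖ = 2 * ‖1 - a‖ := by
  have h1 : ‖1 - (starRingEnd ℂ) a * ((1:ℝ):ℂ)‖ = ‖1 - a‖ := by
    simp only [Complex.ofReal_one, mul_one]
    rw [show (1 : ℂ) - (starRingEnd ℂ) a = (starRingEnd ℂ) (1 - a) by
      rw [map_sub, map_one]]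
    exact RCLike.norm_conj _
  have h2 : ‖a - ((1:ℝ):ℂ)‖ = ‖1 - a‖ := by
    rw [Complex.ofReal_one, ← norm_neg]; ring_nf
  rw [h1, h2]; ring

theorem horosphere_limit (t : ℕ → ℝ) (ht : Tendsto t atTop atTop)
    (x : ℕ → ℝ) (hx : ∀ n, x n = (-t n + 1) / (-t n - 1))
    (x₀ : ℝ) (hx₀ : x₀ ∈ Set.Ioo (-1 : ℝ) 1) (z : ℂ) (hz : ‖z‖ < 1) :
    Tendsto (fun n => hypDist z ((x n : ℝ) : ℂ) - hypDist (x₀ : ℂ) ((x n : ℝ) : ℂ))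
      atTop
      (𝓝 (Real.log ((1 - x₀ ^ 2) * ‖1 - z‖ ^ 2
        / ((1 - ‖z‖ ^ 2) * ‖1 - (x₀ : ℂ)‖ ^ 2)))) := by
  obtain ⟨hx₀l, hx₀r⟩ := hx₀
  have hx₀abs : |x₀| < 1 := abs_lt.mpr ⟨hx₀l, hx₀r⟩
  have hx₀n : ‖(x₀:ℂ)‖ < 1 := by rwa [Complex.norm_real, Real.norm_eq_abs]
  -- x n rewritten
  have hxform : ∀ n, x n = (t n - 1) / (t n + 1) := by
    intro n
    rw [hx n, show -t n + 1 = -(t n - 1) by ring, show -t n - 1 = -(t n + 1) by ring,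
      neg_div_neg_eq]
  -- x n → 1
  have hxt : Tendsto (fun n => x n) atTop (𝓝 1) := by
    have h1 : Tendsto (fun n => t n + 1) atTop atTop :=
      tendsto_atTop_add_const_right _ 1 ht
    have h2 : Tendsto (fun n => 2 / (t n + 1)) atTop (𝓝 0) :=
      Tendsto.div_atTop tendsto_const_nhds h1
    have h3 : Tendsto (fun n => 1 - 2 / (t n + 1)) atTop (𝓝 (1 - 0)) :=
      tendsto_const_nhds.sub h2
    rw [sub_zero] at h3
    refine h3.congr' ?_
    filter_upwards [ht.eventually_ge_atTop 2] with n hn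
    rw [hxform n]
    have : t n + 1 ≠ 0 := by linarith
    field_simp
    ring
  -- eventually |x n| < 1
  have hev : ∀ᶠ n in atTop, |x n| < 1 := by
    filter_upwards [ht.eventually_ge_atTop 2] with n hn
    rw [hxform n, abs_lt]
    have h0 : 0 < t n + 1 := by linarith
    constructor
    · rw [lt_div_iff₀ h0]; linarith
    · rw [div_lt_one h0]; linarith
  -- limits of the S-terms
  have hS : ∀ a : ℂ, ‖a‖ < 1 →
      Tendsto (fun n => Real.log ((‖1 - (starRingEnd ℂ) a * ((x n : ℝ):ℂ)‖ + ‖a - ((x n : ℝ):ℂ)‖)^2))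
        atTop (𝓝 (Real.log ((2 * ‖1 - a‖)^2))) := by
    intro a ha
    have hane : (1 : ℂ) - a ≠ 0 := by
      intro h
      have : a = 1 := by linear_combination -h
      rw [this] at ha; simp at ha
    have hpos : 0 < ‖(1:ℂ) - a‖ := norm_pos_iff.mpr hane
    have hc : Continuous (fun y : ℝ => (‖1 - (starRingEnd ℂ) a * ((y:ℝ):ℂ)‖ + ‖a - ((y:ℝ):ℂ)‖)^2) := by
      fun_prop
    have h1 : Tendsto (fun n => (‖1 - (starRingEnd ℂ) a * ((x n : ℝ):ℂ)‖ + ‖a - ((x n : ℝ):ℂ)‖)^2)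
        atTop (𝓝 ((2 * ‖1 - a‖)^2)) := by
      have := (hc.tendsto 1).comp hxt
      rwa [norm_one_sub_at_one a] at this
    exact (Real.continuousAt_log (by positivity)).tendsto.comp h1
  have hz2 : 0 < 1 - ‖z‖^2 := by nlinarith [norm_nonneg z]
  have hx₀2 : 0 < 1 - x₀^2 := by nlinarith
  have hnz : 0 < ‖(1:ℂ) - z‖ := by
    apply norm_pos_iff.mpr
    intro h
    have : z = 1 := by linear_combination -h
    rw [this] at hz; simp at hz
  have hnx₀ : 0 < ‖(1:ℂ) - (x₀:ℂ)‖ := by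
    apply norm_pos_iff.mpr
    intro h
    have : (x₀:ℂ) = 1 := by linear_combination -h
    rw [this] at hx₀n; simp at hx₀n
  -- combined limit
  have hlim : Tendsto (fun n =>
      Real.log ((‖1 - (starRingEnd ℂ) z * ((x n : ℝ):ℂ)‖ + ‖z - ((x n : ℝ):ℂ)‖)^2)
      - Real.log ((‖1 - (starRingEnd ℂ) (x₀:ℂ) * ((x n : ℝ):ℂ)‖ + ‖(x₀:ℂ) - ((x n : ℝ):ℂ)‖)^2)
      - Real.log (1 - ‖z‖^2) + Real.log (1 - x₀^2)) atTop
      (𝓝 (Real.log ((2 * ‖1 - z‖)^2) - Real.log ((2 * ‖1 - (x₀:ℂ)‖)^2)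
        - Real.log (1 - ‖z‖^2) + Real.log (1 - x₀^2))) :=
    (((hS z hz).sub (hS _ hx₀n)).sub tendsto_const_nhds).add tendsto_const_nhds
  -- identify the limit value
  have hval : Real.log ((2 * ‖1 - z‖)^2) - Real.log ((2 * ‖1 - (x₀:ℂ)‖)^2)
      - Real.log (1 - ‖z‖^2) + Real.log (1 - x₀^2)
      = Real.log ((1 - x₀ ^ 2) * ‖1 - z‖ ^ 2 / ((1 - ‖z‖ ^ 2) * ‖1 - (x₀ : ℂ)‖ ^ 2)) := by
    rw [show (2 * ‖(1:ℂ) - z‖)^2 = 4 * ‖(1:ℂ) - z‖^2 by ring,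
      show (2 * ‖(1:ℂ) - (x₀:ℂ)‖)^2 = 4 * ‖(1:ℂ) - (x₀:ℂ)‖^2 by ring,
      Real.log_mul (by norm_num) (by positivity),
      Real.log_mul (by norm_num) (by positivity),
      Real.log_div (by positivity) (by positivity),
      Real.log_mul (by positivity) (by positivity),
      Real.log_mul (by positivity) (by positivity)]
    ring
  rw [← hval]
  refine hlim.congr' ?_
  filter_upwards [hev] with n hn
  have hxz := hypDist_eq z hz (x n) hn
  have hxx₀ := hypDist_eq (x₀:ℂ) hx₀n (x n) hn
  rw [hxz, hxx₀]
  have : ‖(x₀:ℂ)‖^2 = x₀^2 := by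
    rw [Complex.norm_real, Real.norm_eq_abs, sq_abs]
  rw [this]
  ring
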